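/- In type D_n (n ≥ 4), for i ∈ I = [n], one has 2⟨α_i^∨, ρ − ρ_{I∖{i}}⟩ = 2n − i − 1 if 2 ≤ i ≤ n−2, and = 2n − 2 if i ∈ {1, n−1, n}. -/

import Mathlib

/-- Standard dot product on `ℚ^n` (the `ε_s` form an orthonormal basis). -/
def dotV {n : ℕ} (x y : Fin n → ℚ) : ℚ := ∑ j, x j * y j

/-- The coroot `γ^∨ = 2γ / ⟨γ,γ⟩` of a root `γ`, identified with a vector of `ℚ^n`
via the dot product. -/
def corootV {n : ℕ} (γ : Fin n → ℚ) : Fin n → ℚ := (2 / dotV γ γ) • γ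

/-- The simple roots of type `D_n` (1-based index `j ∈ [n]`):
`α_j = ε_j − ε_{j+1}` for `j < n` and `α_n = ε_{n−1} + ε_n`. -/
def alD (n : ℕ) : ℕ → (Fin n → ℚ) := fun j =>
  if h : 1 ≤ j ∧ j < n then
    Pi.single (⟨j - 1, by omega⟩ : Fin n) 1 - Pi.single (⟨j, by omega⟩ : Fin n) 1
  else if h2 : j = n ∧ 2 ≤ n then
    (Pi.single (⟨n - 2, by omega⟩ : Fin n) 1 : Fin n → ℚ) +
      Pi.single (⟨n - 1, by omega⟩ : Fin n) 1
  else 0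

/-- The positive roots of type `D_n` as a `Finset`: `Δ^+ = {ε_s ± ε_t : s < t}`. -/
noncomputable def posFinsetD (n : ℕ) : Finset (Fin n → ℚ) :=
  ((Finset.univ : Finset (Fin n × Fin n)).filter fun p => p.1 < p.2).image
      (fun p => (Pi.single p.1 1 : Fin n → ℚ) - Pi.single p.2 1) ∪
    ((Finset.univ : Finset (Fin n × Fin n)).filter fun p => p.1 < p.2).image
      (fun p => (Pi.single p.1 1 : Fin n → ℚ) + Pi.single p.2 1)

/-- Half the sum of the positive roots of type `D_n` lying in a given set `S`;
`ρ = rhoSubD n Set.univ` and `ρ_J = rhoSubD n (span of the α_j, j ∈ J)`. -/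
noncomputable def rhoSubD (n : ℕ) (S : Set (Fin n → ℚ)) : Fin n → ℚ :=
  (1 / 2 : ℚ) • ∑ α ∈ posFinsetD n, Set.indicator S id α

/-! ### Auxiliary lemmas -/

section Aux

open Finset

variable {n : ℕ}

lemma td_dotV_single_right (c : Fin n → ℚ) (a : Fin n) : dotV c (Pi.single a 1) = c a := by
  simp [dotV, Pi.single_apply]

lemma td_dotV_single_left (a : Fin n) (x : Fin n → ℚ) : dotV (Pi.single a 1) x = x a := by
  simp [dotV, Pi.single_apply, ite_mul]

lemma td_dotV_add_right (c x y : Fin n → ℚ) : dotV c (x + y) = dotV c x + dotV c y := by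
  simp [dotV, mul_add, Finset.sum_add_distrib]

lemma td_dotV_sub_right (c x y : Fin n → ℚ) : dotV c (x - y) = dotV c x - dotV c y := by
  simp [dotV, mul_sub, Finset.sum_sub_distrib]

lemma td_dotV_smul_right (c : Fin n → ℚ) (r : ℚ) (x : Fin n → ℚ) :
    dotV c (r • x) = r * dotV c x := by
  simp [dotV, Finset.mul_sum, mul_left_comm]

lemma td_dotV_sub_left (x y c : Fin n → ℚ) : dotV (x - y) c = dotV x c - dotV y c := by
  simp [dotV, sub_mul, Finset.sum_sub_distrib]

lemma td_dotV_add_left (x y c : Fin n → ℚ) : dotV (x + y) c = dotV x c + dotV y c := by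
  simp [dotV, add_mul, Finset.sum_add_distrib]

lemma td_dotV_zero_right (c : Fin n → ℚ) : dotV c 0 = 0 := by simp [dotV]

lemma td_dotV_sum_right (c : Fin n → ℚ) (S : Finset (Fin n → ℚ))
    (f : (Fin n → ℚ) → (Fin n → ℚ)) :
    dotV c (∑ α ∈ S, f α) = ∑ α ∈ S, dotV c (f α) := by
  simp only [dotV, Finset.sum_apply, Finset.mul_sum]
  exact Finset.sum_comm

lemma td_alD_lt (j : ℕ) (h1 : 1 ≤ j) (h2 : j < n) :
    alD n j = Pi.single (⟨j - 1, by omega⟩ : Fin n) 1 - Pi.single (⟨j, by omega⟩ : Fin n) 1 := by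
  simp [alD, h1, h2]

lemma td_alD_top (h : 2 ≤ n) :
    alD n n = (Pi.single (⟨n - 2, by omega⟩ : Fin n) 1 : Fin n → ℚ) +
      Pi.single (⟨n - 1, by omega⟩ : Fin n) 1 := by
  simp [alD, h]

/-- The dot product with a fixed vector, as a linear map. -/
def td_dotL (c : Fin n → ℚ) : (Fin n → ℚ) →ₗ[ℚ] ℚ where
  toFun x := dotV c x
  map_add' x y := by simp [dotV, mul_add, Finset.sum_add_distrib]
  map_smul' r x := by simp [dotV, Finset.mul_sum, mul_left_comm]

lemma td_span_ker (w : Fin n → ℚ) (S : Set ℕ) (h : ∀ j ∈ S, dotV w (alD n j) = 0) :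
    ∀ x ∈ Submodule.span ℚ (alD n '' S), dotV w x = 0 := by
  intro x hx
  have hle : Submodule.span ℚ (alD n '' S) ≤ LinearMap.ker (td_dotL w) := by
    rw [Submodule.span_le]
    rintro _ ⟨j, hj, rfl⟩
    exact h j hj
  exact hle hx

lemma td_sub_mem_span (S : Set ℕ) (s t : ℕ) (h : s ≤ t) (ht : t < n)
    (hS : ∀ j, s < j → j ≤ t → j ∈ S) :
    (Pi.single (⟨s, by omega⟩ : Fin n) 1 - Pi.single (⟨t, ht⟩ : Fin n) 1 : Fin n → ℚ)
      ∈ Submodule.span ℚ (alD n '' S) := by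
  induction t with
  | zero =>
    have : s = 0 := by omega
    subst this; simp
  | succ t ih =>
    rcases Nat.lt_or_ge s (t+1) with hlt | hge
    · have hst : s ≤ t := by omega
      have key : (Pi.single (⟨s, by omega⟩ : Fin n) 1 - Pi.single (⟨t+1, ht⟩ : Fin n) 1 : Fin n → ℚ)
          = (Pi.single (⟨s, by omega⟩ : Fin n) 1 - Pi.single (⟨t, by omega⟩ : Fin n) 1)
            + ((Pi.single (⟨t, by omega⟩ : Fin n) 1 : Fin n → ℚ)
                - Pi.single (⟨t+1, ht⟩ : Fin n) 1) := by
        abel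
      rw [key]
      refine Submodule.add_mem _ (ih hst (by omega) (fun j h1 h2 => hS j h1 (by omega))) ?_
      have hmem : alD n (t+1) ∈ alD n '' S := ⟨t+1, hS (t+1) (by omega) le_rfl, rfl⟩
      rw [td_alD_lt (n := n) (t+1) (by omega) ht] at hmem
      have heq : (Pi.single (⟨t, by omega⟩ : Fin n) 1 : Fin n → ℚ) - Pi.single (⟨t+1, ht⟩ : Fin n) 1
          = Pi.single (⟨t+1-1, by omega⟩ : Fin n) 1 - Pi.single (⟨t+1, by omega⟩ : Fin n) 1 := by
        norm_num
      rw [heq]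
      exact Submodule.subset_span hmem
    · have : s = t + 1 := by omega
      subst this; simp

lemma td_add_mem_span (S : Set ℕ) (hn : 2 ≤ n) (hnS : n ∈ S) (s t : ℕ) (hst : s < t) (ht : t < n)
    (hS1 : ∀ j, s < j → j ≤ n - 2 → j ∈ S) (hS2 : ∀ j, t < j → j ≤ n - 1 → j ∈ S) :
    (Pi.single (⟨s, by omega⟩ : Fin n) 1 + Pi.single (⟨t, ht⟩ : Fin n) 1 : Fin n → ℚ)
      ∈ Submodule.span ℚ (alD n '' S) := by
  have hA := td_sub_mem_span (n := n) S s (n-2) (by omega) (by omega) hS1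
  have hB := td_sub_mem_span (n := n) S t (n-1) (by omega) (by omega) hS2
  have hC : ((Pi.single (⟨n - 2, by omega⟩ : Fin n) 1 : Fin n → ℚ) +
      Pi.single (⟨n - 1, by omega⟩ : Fin n) 1) ∈ Submodule.span ℚ (alD n '' S) := by
    have hmem : alD n n ∈ alD n '' S := ⟨n, hnS, rfl⟩
    rw [td_alD_top hn] at hmem
    exact Submodule.subset_span hmem
  have key : (Pi.single (⟨s, by omega⟩ : Fin n) 1 + Pi.single (⟨t, ht⟩ : Fin n) 1 : Fin n → ℚ)
      = ((Pi.single (⟨s, by omega⟩ : Fin n) 1 : Fin n → ℚ) - Pi.single (⟨n-2, by omega⟩ : Fin n) 1)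
        + ((Pi.single (⟨t, ht⟩ : Fin n) 1 : Fin n → ℚ) - Pi.single (⟨n-1, by omega⟩ : Fin n) 1)
        + ((Pi.single (⟨n - 2, by omega⟩ : Fin n) 1 : Fin n → ℚ)
            + Pi.single (⟨n - 1, by omega⟩ : Fin n) 1) := by
    abel
  rw [key]
  exact Submodule.add_mem _ (Submodule.add_mem _ hA hB) hC

lemma td_sum_coords_single (a : Fin n) : ∑ j, (Pi.single a 1 : Fin n → ℚ) j = 1 := by
  simp [Pi.single_apply]

lemma td_single_sub_inj {a b c d : Fin n} (hab : a < b) (hcd : c < d)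
    (h : (Pi.single a 1 : Fin n → ℚ) - Pi.single b 1
        = (Pi.single c 1 : Fin n → ℚ) - Pi.single d 1) : a = c ∧ b = d := by
  have hab' : (a:ℕ) < b := hab
  have hcd' : (c:ℕ) < d := hcd
  have h1 := congrFun h a
  have h2 := congrFun h b
  simp only [Pi.sub_apply, Pi.single_apply, Fin.ext_iff] at h1 h2 ⊢
  split_ifs at h1 h2 <;> (try norm_num at h1) <;> (try norm_num at h2) <;> omega

lemma td_single_add_inj {a b c d : Fin n} (hab : a < b) (hcd : c < d)
    (h : (Pi.single a 1 : Fin n → ℚ) + Pi.single b 1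
        = (Pi.single c 1 : Fin n → ℚ) + Pi.single d 1) : a = c ∧ b = d := by
  have hab' : (a:ℕ) < b := hab
  have hcd' : (c:ℕ) < d := hcd
  have h1 := congrFun h a
  have h2 := congrFun h b
  simp only [Pi.add_apply, Pi.single_apply, Fin.ext_iff] at h1 h2 ⊢
  split_ifs at h1 h2 <;> (try norm_num at h1) <;> (try norm_num at h2) <;> omega

lemma td_sum_pos_split (f : (Fin n → ℚ) → ℚ) :
    ∑ α ∈ posFinsetD n, f α
      = (∑ p ∈ (Finset.univ : Finset (Fin n × Fin n)).filter (fun p => p.1 < p.2),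
          f ((Pi.single p.1 1 : Fin n → ℚ) - Pi.single p.2 1))
        + ∑ p ∈ (Finset.univ : Finset (Fin n × Fin n)).filter (fun p => p.1 < p.2),
            f ((Pi.single p.1 1 : Fin n → ℚ) + Pi.single p.2 1) := by
  classical
  have hd : Disjoint
      (((Finset.univ : Finset (Fin n × Fin n)).filter fun p => p.1 < p.2).image
        (fun p => (Pi.single p.1 1 : Fin n → ℚ) - Pi.single p.2 1))
      (((Finset.univ : Finset (Fin n × Fin n)).filter fun p => p.1 < p.2).image
        (fun p => (Pi.single p.1 1 : Fin n → ℚ) + Pi.single p.2 1)) := by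
    rw [Finset.disjoint_left]
    intro x hx1 hx2
    obtain ⟨p, hp, rfl⟩ := Finset.mem_image.mp hx1
    obtain ⟨q, hq, he⟩ := Finset.mem_image.mp hx2
    have := congrArg (fun v : Fin n → ℚ => ∑ j, v j) he
    simp only [Pi.sub_apply, Pi.add_apply, Finset.sum_sub_distrib, Finset.sum_add_distrib,
      td_sum_coords_single] at this
    norm_num at this
  have hi1 : ∀ p ∈ (Finset.univ : Finset (Fin n × Fin n)).filter (fun p => p.1 < p.2),
      ∀ q ∈ (Finset.univ : Finset (Fin n × Fin n)).filter (fun p => p.1 < p.2),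
      (Pi.single p.1 1 : Fin n → ℚ) - Pi.single p.2 1
        = (Pi.single q.1 1 : Fin n → ℚ) - Pi.single q.2 1 → p = q := by
    intro p hp q hq h
    have := td_single_sub_inj (Finset.mem_filter.mp hp).2 (Finset.mem_filter.mp hq).2 h
    exact Prod.ext this.1 this.2
  have hi2 : ∀ p ∈ (Finset.univ : Finset (Fin n × Fin n)).filter (fun p => p.1 < p.2),
      ∀ q ∈ (Finset.univ : Finset (Fin n × Fin n)).filter (fun p => p.1 < p.2),
      (Pi.single p.1 1 : Fin n → ℚ) + Pi.single p.2 1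
        = (Pi.single q.1 1 : Fin n → ℚ) + Pi.single q.2 1 → p = q := by
    intro p hp q hq h
    have := td_single_add_inj (Finset.mem_filter.mp hp).2 (Finset.mem_filter.mp hq).2 h
    exact Prod.ext this.1 this.2
  rw [posFinsetD, Finset.sum_union hd, Finset.sum_image hi1, Finset.sum_image hi2]

lemma td_reduction (c : Fin n → ℚ) (V : Submodule ℚ (Fin n → ℚ)) :
    2 * dotV c (rhoSubD n Set.univ - rhoSubD n (V : Set (Fin n → ℚ)))
      = ∑ α ∈ posFinsetD n,
          (dotV c α - Set.indicator (V : Set (Fin n → ℚ)) (fun β => dotV c β) α) := by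
  classical
  have key : ∀ α : Fin n → ℚ,
      dotV c (Set.indicator (V : Set (Fin n → ℚ)) id α)
        = Set.indicator (V : Set (Fin n → ℚ)) (fun β => dotV c β) α := by
    intro α
    by_cases h : α ∈ (V : Set (Fin n → ℚ))
    · rw [Set.indicator_of_mem h, Set.indicator_of_mem h]; rfl
    · rw [Set.indicator_of_notMem h, Set.indicator_of_notMem h, td_dotV_zero_right]
  rw [rhoSubD, rhoSubD, td_dotV_sub_right, td_dotV_smul_right, td_dotV_smul_right,
    td_dotV_sum_right, td_dotV_sum_right]
  simp only [Set.indicator_univ, id_eq, key]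
  rw [Finset.sum_sub_distrib]
  ring

lemma td_corootV_sub (a b : Fin n) (h : a ≠ b) :
    corootV ((Pi.single a 1 : Fin n → ℚ) - Pi.single b 1)
      = (Pi.single a 1 : Fin n → ℚ) - Pi.single b 1 := by
  have hd : dotV ((Pi.single a 1 : Fin n → ℚ) - Pi.single b 1)
      ((Pi.single a 1 : Fin n → ℚ) - Pi.single b 1) = 2 := by
    rw [td_dotV_sub_right, td_dotV_single_right, td_dotV_single_right]
    simp [Pi.sub_apply, Pi.single_apply, h, Ne.symm h]
    norm_num
  rw [corootV, hd]
  norm_num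

lemma td_corootV_add (a b : Fin n) (h : a ≠ b) :
    corootV ((Pi.single a 1 : Fin n → ℚ) + Pi.single b 1)
      = (Pi.single a 1 : Fin n → ℚ) + Pi.single b 1 := by
  have hd : dotV ((Pi.single a 1 : Fin n → ℚ) + Pi.single b 1)
      ((Pi.single a 1 : Fin n → ℚ) + Pi.single b 1) = 2 := by
    rw [td_dotV_add_right, td_dotV_single_right, td_dotV_single_right]
    simp [Pi.add_apply, Pi.single_apply, h, Ne.symm h]
    norm_num
  rw [corootV, hd]
  norm_num

lemma td_pair_sum (g : ℕ → ℕ → ℚ) :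
    (∑ p ∈ (Finset.univ : Finset (Fin n × Fin n)).filter (fun p => p.1 < p.2),
        g p.1.val p.2.val)
      = ∑ s ∈ Finset.range n, ∑ t ∈ Finset.range n, (if s < t then g s t else 0) := by
  rw [Finset.sum_filter, Fintype.sum_prod_type]
  rw [← Fin.sum_univ_eq_sum_range (fun s => ∑ t ∈ Finset.range n, if s < t then g s t else 0) n]
  refine Finset.sum_congr rfl fun s _ => ?_
  rw [← Fin.sum_univ_eq_sum_range (fun t => if (s:ℕ) < t then g s t else 0) n]
  refine Finset.sum_congr rfl fun t _ => ?_
  simp only [Fin.lt_def]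

lemma td_count_ge (N a : ℕ) :
    (∑ x ∈ Finset.range N, if a ≤ x then (1:ℚ) else 0) = ((N - a : ℕ) : ℚ) := by
  induction N with
  | zero => simp
  | succ m ih =>
    rw [Finset.sum_range_succ, ih]
    by_cases h : a ≤ m
    · rw [if_pos h]
      have h2 : m + 1 - a = (m - a) + 1 := by omega
      rw [h2]; push_cast; ring
    · rw [if_neg h]
      have h2 : m + 1 - a = 0 := by omega
      have h3 : m - a = 0 := by omega
      rw [h2, h3]; norm_num

lemma td_count_lt (N a : ℕ) (h : a ≤ N) :
    (∑ x ∈ Finset.range N, if x < a then (1:ℚ) else 0) = (a : ℚ) := by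
  have key : ∀ x, (if x < a then (1:ℚ) else 0) = 1 - (if a ≤ x then 1 else 0) := by
    intro x
    split_ifs <;> first | (exfalso; omega) | norm_num
  simp only [key]
  rw [Finset.sum_sub_distrib, td_count_ge, Finset.sum_const, Finset.card_range]
  rw [Nat.cast_sub h]
  simp

lemma td_sum_if_eq (N a : ℕ) (h : a < N) (f : ℕ → ℚ) :
    (∑ x ∈ Finset.range N, if x = a then f x else 0) = f a := by
  rw [Finset.sum_ite_eq' (Finset.range N) a f]
  simp [h]

end Aux

section Cases

open Finset

/-- Generic case `1 ≤ i ≤ n - 2`. -/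
lemma td_caseA (n i : ℕ) (hn : 4 ≤ n) (hi1 : 1 ≤ i) (hi2 : i ≤ n - 2) :
    2 * dotV (corootV (alD n i))
        (rhoSubD n Set.univ -
          rhoSubD n
            (Submodule.span ℚ (alD n '' {j | 1 ≤ j ∧ j ≤ n ∧ j ≠ i}) :
              Submodule ℚ (Fin n → ℚ))) =
      2 * (n : ℚ) - (i : ℚ) - 1 := by
  have hin : i < n := by omega
  have hal : alD n i
      = (Pi.single (⟨i-1, by omega⟩ : Fin n) 1 : Fin n → ℚ) - Pi.single (⟨i, hin⟩ : Fin n) 1 :=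
    td_alD_lt i hi1 hin
  have hco : corootV (alD n i) = alD n i := by
    rw [hal]
    exact td_corootV_sub _ _ (by simp only [ne_eq, Fin.ext_iff]; omega)
  rw [hco, td_reduction, td_sum_pos_split]
  have hker := td_span_ker (n := n) (fun j => if (j:ℕ) < i then (1:ℚ) else 0)
      {j | 1 ≤ j ∧ j ≤ n ∧ j ≠ i} (by
    rintro j ⟨hj1, hj2, hj3⟩
    rcases eq_or_lt_of_le hj2 with rfl | hjn
    · rw [td_alD_top (by omega), td_dotV_add_right, td_dotV_single_right, td_dotV_single_right]
      try dsimp only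
      rw [if_neg (by omega), if_neg (by omega)]
      norm_num
    · rw [td_alD_lt j hj1 hjn, td_dotV_sub_right, td_dotV_single_right, td_dotV_single_right]
      try dsimp only
      split_ifs <;> first | (exfalso; omega) | norm_num)
  have hsub : (∑ p ∈ (Finset.univ : Finset (Fin n × Fin n)).filter (fun p => p.1 < p.2),
        (dotV (alD n i) ((Pi.single p.1 1 : Fin n → ℚ) - Pi.single p.2 1)
          - Set.indicator (↑(Submodule.span ℚ (alD n '' {j | 1 ≤ j ∧ j ≤ n ∧ j ≠ i})))
              (fun β => dotV (alD n i) β)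
              ((Pi.single p.1 1 : Fin n → ℚ) - Pi.single p.2 1)))
      = ∑ p ∈ (Finset.univ : Finset (Fin n × Fin n)).filter (fun p => p.1 < p.2),
          (fun s t => if s < i ∧ i ≤ t then
              ((if s = i-1 then (1:ℚ) else 0) + (if t = i then 1 else 0)) else 0)
            p.1.val p.2.val := by
    refine Finset.sum_congr rfl fun p hp => ?_
    have hst : (p.1:ℕ) < (p.2:ℕ) := (Finset.mem_filter.mp hp).2
    have ht2 : (p.2:ℕ) < n := p.2.isLt
    try dsimp only
    by_cases hc : (p.1:ℕ) < i ∧ i ≤ (p.2:ℕ)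
    · have hnm : ((Pi.single p.1 1 : Fin n → ℚ) - Pi.single p.2 1)
          ∉ (↑(Submodule.span ℚ (alD n '' {j | 1 ≤ j ∧ j ≤ n ∧ j ≠ i})) :
              Set (Fin n → ℚ)) := by
        intro hmem
        have h0 := hker _ hmem
        rw [td_dotV_sub_right, td_dotV_single_right, td_dotV_single_right] at h0
        try dsimp only at h0
        rw [if_pos hc.1, if_neg (by omega : ¬ ((p.2:ℕ) < i))] at h0
        norm_num at h0
      rw [Set.indicator_of_notMem hnm, sub_zero, if_pos hc, hal,
        td_dotV_sub_left, td_dotV_single_left, td_dotV_single_left]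
      simp only [Pi.sub_apply, Pi.single_apply, Fin.ext_iff]
      split_ifs <;> first | (exfalso; omega) | norm_num
    · have hm : ((Pi.single p.1 1 : Fin n → ℚ) - Pi.single p.2 1)
          ∈ (↑(Submodule.span ℚ (alD n '' {j | 1 ≤ j ∧ j ≤ n ∧ j ≠ i})) :
              Set (Fin n → ℚ)) := by
        exact td_sub_mem_span _ p.1.val p.2.val hst.le ht2
          (fun j hj1 hj2 => show 1 ≤ j ∧ j ≤ n ∧ j ≠ i from ⟨by omega, by omega, by omega⟩)
      rw [Set.indicator_of_mem hm, sub_self, if_neg hc]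
  have hadd : (∑ p ∈ (Finset.univ : Finset (Fin n × Fin n)).filter (fun p => p.1 < p.2),
        (dotV (alD n i) ((Pi.single p.1 1 : Fin n → ℚ) + Pi.single p.2 1)
          - Set.indicator (↑(Submodule.span ℚ (alD n '' {j | 1 ≤ j ∧ j ≤ n ∧ j ≠ i})))
              (fun β => dotV (alD n i) β)
              ((Pi.single p.1 1 : Fin n → ℚ) + Pi.single p.2 1)))
      = ∑ p ∈ (Finset.univ : Finset (Fin n × Fin n)).filter (fun p => p.1 < p.2),
          (fun s t => if s < i then
              ((if s = i-1 then (1:ℚ) else 0) + (if t = i-1 then 1 else 0)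
                - (if t = i then 1 else 0)) else 0)
            p.1.val p.2.val := by
    refine Finset.sum_congr rfl fun p hp => ?_
    have hst : (p.1:ℕ) < (p.2:ℕ) := (Finset.mem_filter.mp hp).2
    have ht2 : (p.2:ℕ) < n := p.2.isLt
    try dsimp only
    by_cases hc : (p.1:ℕ) < i
    · have hnm : ((Pi.single p.1 1 : Fin n → ℚ) + Pi.single p.2 1)
          ∉ (↑(Submodule.span ℚ (alD n '' {j | 1 ≤ j ∧ j ≤ n ∧ j ≠ i})) :
              Set (Fin n → ℚ)) := by
        intro hmem
        have h0 := hker _ hmem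
        rw [td_dotV_add_right, td_dotV_single_right, td_dotV_single_right] at h0
        try dsimp only at h0
        rw [if_pos hc] at h0
        split_ifs at h0 <;> norm_num at h0
      rw [Set.indicator_of_notMem hnm, sub_zero, if_pos hc, hal,
        td_dotV_sub_left, td_dotV_single_left, td_dotV_single_left]
      simp only [Pi.add_apply, Pi.single_apply, Fin.ext_iff]
      split_ifs <;> first | (exfalso; omega) | norm_num
    · have hm : ((Pi.single p.1 1 : Fin n → ℚ) + Pi.single p.2 1)
          ∈ (↑(Submodule.span ℚ (alD n '' {j | 1 ≤ j ∧ j ≤ n ∧ j ≠ i})) :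
              Set (Fin n → ℚ)) := by
        exact td_add_mem_span _ (by omega)
          (show 1 ≤ n ∧ n ≤ n ∧ n ≠ i from ⟨by omega, le_rfl, by omega⟩)
          p.1.val p.2.val hst ht2
          (fun j hj1 hj2 => show 1 ≤ j ∧ j ≤ n ∧ j ≠ i from ⟨by omega, by omega, by omega⟩)
          (fun j hj1 hj2 => show 1 ≤ j ∧ j ≤ n ∧ j ≠ i from ⟨by omega, by omega, by omega⟩)
      rw [Set.indicator_of_mem hm, sub_self, if_neg hc]
  rw [hsub, hadd,
    td_pair_sum (fun s t => if s < i ∧ i ≤ t then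
      ((if s = i-1 then (1:ℚ) else 0) + (if t = i then 1 else 0)) else 0),
    td_pair_sum (fun s t => if s < i then
      ((if s = i-1 then (1:ℚ) else 0) + (if t = i-1 then 1 else 0)
        - (if t = i then 1 else 0)) else 0)]
  have e1 : ∑ s ∈ Finset.range n, ∑ t ∈ Finset.range n,
      (if s < t then (if s < i ∧ i ≤ t then
          ((if s = i-1 then (1:ℚ) else 0) + (if t = i then 1 else 0)) else 0) else 0)
      = ((n - i : ℕ) : ℚ) + (i : ℚ) := by
    have hpt : ∀ s ∈ Finset.range n, ∀ t ∈ Finset.range n,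
        (if s < t then (if s < i ∧ i ≤ t then
            ((if s = i-1 then (1:ℚ) else 0) + (if t = i then 1 else 0)) else 0) else 0)
          = (if s = i-1 then (if i ≤ t then (1:ℚ) else 0) else 0)
            + (if t = i then (if s < i then (1:ℚ) else 0) else 0) := by
      intro s _ t _
      split_ifs <;> first | (exfalso; omega) | norm_num
    rw [Finset.sum_congr rfl (fun s hs => Finset.sum_congr rfl (fun t ht => hpt s hs t ht))]
    simp only [Finset.sum_add_distrib]
    have hA : ∑ s ∈ Finset.range n, ∑ t ∈ Finset.range n,
        (if s = i-1 then (if i ≤ t then (1:ℚ) else 0) else 0) = ((n - i : ℕ) : ℚ) := by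
      have h1 : ∀ s ∈ Finset.range n, (∑ t ∈ Finset.range n,
          (if s = i-1 then (if i ≤ t then (1:ℚ) else 0) else 0))
          = (if s = i-1 then ((n - i : ℕ) : ℚ) else 0) := by
        intro s _
        by_cases h : s = i-1
        · simp only [h, if_true, td_count_ge]
        · simp [h]
      rw [Finset.sum_congr rfl h1, td_sum_if_eq n (i-1) (by omega)]
    have hB : ∑ s ∈ Finset.range n, ∑ t ∈ Finset.range n,
        (if t = i then (if s < i then (1:ℚ) else 0) else 0) = (i : ℚ) := by
      have h1 : ∀ s ∈ Finset.range n, (∑ t ∈ Finset.range n,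
          (if t = i then (if s < i then (1:ℚ) else 0) else 0))
          = (if s < i then (1:ℚ) else 0) := by
        intro s _
        rw [td_sum_if_eq n i (by omega)]
      rw [Finset.sum_congr rfl h1, td_count_lt n i (by omega)]
    rw [hA, hB]
  have e2 : ∑ s ∈ Finset.range n, ∑ t ∈ Finset.range n,
      (if s < t then (if s < i then
          ((if s = i-1 then (1:ℚ) else 0) + (if t = i-1 then 1 else 0)
            - (if t = i then 1 else 0)) else 0) else 0)
      = ((n - i : ℕ) : ℚ) + ((i - 1 : ℕ) : ℚ) - (i : ℚ) := by
    have hpt : ∀ s ∈ Finset.range n, ∀ t ∈ Finset.range n,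
        (if s < t then (if s < i then
            ((if s = i-1 then (1:ℚ) else 0) + (if t = i-1 then 1 else 0)
              - (if t = i then 1 else 0)) else 0) else 0)
          = (if s = i-1 then (if i ≤ t then (1:ℚ) else 0) else 0)
            + (if t = i-1 then (if s < i-1 then (1:ℚ) else 0) else 0)
            - (if t = i then (if s < i then (1:ℚ) else 0) else 0) := by
      intro s _ t _
      split_ifs <;> first | (exfalso; omega) | norm_num
    rw [Finset.sum_congr rfl (fun s hs => Finset.sum_congr rfl (fun t ht => hpt s hs t ht))]
    simp only [Finset.sum_sub_distrib, Finset.sum_add_distrib]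
    have hA : ∑ s ∈ Finset.range n, ∑ t ∈ Finset.range n,
        (if s = i-1 then (if i ≤ t then (1:ℚ) else 0) else 0) = ((n - i : ℕ) : ℚ) := by
      have h1 : ∀ s ∈ Finset.range n, (∑ t ∈ Finset.range n,
          (if s = i-1 then (if i ≤ t then (1:ℚ) else 0) else 0))
          = (if s = i-1 then ((n - i : ℕ) : ℚ) else 0) := by
        intro s _
        by_cases h : s = i-1
        · simp only [h, if_true, td_count_ge]
        · simp [h]
      rw [Finset.sum_congr rfl h1, td_sum_if_eq n (i-1) (by omega)]
    have hB : ∑ s ∈ Finset.range n, ∑ t ∈ Finset.range n,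
        (if t = i-1 then (if s < i-1 then (1:ℚ) else 0) else 0) = ((i - 1 : ℕ) : ℚ) := by
      have h1 : ∀ s ∈ Finset.range n, (∑ t ∈ Finset.range n,
          (if t = i-1 then (if s < i-1 then (1:ℚ) else 0) else 0))
          = (if s < i-1 then (1:ℚ) else 0) := by
        intro s _
        rw [td_sum_if_eq n (i-1) (by omega)]
      rw [Finset.sum_congr rfl h1, td_count_lt n (i-1) (by omega)]
    have hC : ∑ s ∈ Finset.range n, ∑ t ∈ Finset.range n,
        (if t = i then (if s < i then (1:ℚ) else 0) else 0) = (i : ℚ) := by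
      have h1 : ∀ s ∈ Finset.range n, (∑ t ∈ Finset.range n,
          (if t = i then (if s < i then (1:ℚ) else 0) else 0))
          = (if s < i then (1:ℚ) else 0) := by
        intro s _
        rw [td_sum_if_eq n i (by omega)]
      rw [Finset.sum_congr rfl h1, td_count_lt n i (by omega)]
    rw [hA, hB, hC]
  rw [e1, e2, Nat.cast_sub (by omega : i ≤ n), Nat.cast_sub (by omega : 1 ≤ i)]
  push_cast
  ring

/-- Case `i = n - 1`. -/
lemma td_caseB (n : ℕ) (hn : 4 ≤ n) :
    2 * dotV (corootV (alD n (n-1)))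
        (rhoSubD n Set.univ -
          rhoSubD n
            (Submodule.span ℚ (alD n '' {j | 1 ≤ j ∧ j ≤ n ∧ j ≠ n-1}) :
              Submodule ℚ (Fin n → ℚ))) =
      2 * (n : ℚ) - 2 := by
  have hin : n-1 < n := by omega
  have hal : alD n (n-1)
      = (Pi.single (⟨n-1-1, by omega⟩ : Fin n) 1 : Fin n → ℚ)
        - Pi.single (⟨n-1, by omega⟩ : Fin n) 1 :=
    td_alD_lt (n-1) (by omega) hin
  have hal' : alD n (n-1)
      = (Pi.single (⟨n-2, by omega⟩ : Fin n) 1 : Fin n → ℚ)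
        - Pi.single (⟨n-1, by omega⟩ : Fin n) 1 := by
    rw [hal]
    congr 1
  have hco : corootV (alD n (n-1)) = alD n (n-1) := by
    rw [hal']
    exact td_corootV_sub _ _ (by simp only [ne_eq, Fin.ext_iff]; omega)
  rw [hco, td_reduction, td_sum_pos_split]
  have hker := td_span_ker (n := n) (fun j => if (j:ℕ) < n-1 then (1:ℚ) else -1)
      {j | 1 ≤ j ∧ j ≤ n ∧ j ≠ n-1} (by
    rintro j ⟨hj1, hj2, hj3⟩
    rcases eq_or_lt_of_le hj2 with rfl | hjn
    · rw [td_alD_top (by omega), td_dotV_add_right, td_dotV_single_right, td_dotV_single_right]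
      try dsimp only
      rw [if_pos (by omega), if_neg (by omega)]
      norm_num
    · rw [td_alD_lt j hj1 hjn, td_dotV_sub_right, td_dotV_single_right, td_dotV_single_right]
      try dsimp only
      split_ifs <;> first | (exfalso; omega) | norm_num)
  have hsub : (∑ p ∈ (Finset.univ : Finset (Fin n × Fin n)).filter (fun p => p.1 < p.2),
        (dotV (alD n (n-1)) ((Pi.single p.1 1 : Fin n → ℚ) - Pi.single p.2 1)
          - Set.indicator (↑(Submodule.span ℚ (alD n '' {j | 1 ≤ j ∧ j ≤ n ∧ j ≠ n-1})))
              (fun β => dotV (alD n (n-1)) β)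
              ((Pi.single p.1 1 : Fin n → ℚ) - Pi.single p.2 1)))
      = ∑ p ∈ (Finset.univ : Finset (Fin n × Fin n)).filter (fun p => p.1 < p.2),
          (fun s t => if t = n-1 then ((if s = n-2 then (1:ℚ) else 0) + 1) else 0)
            p.1.val p.2.val := by
    refine Finset.sum_congr rfl fun p hp => ?_
    have hst : (p.1:ℕ) < (p.2:ℕ) := (Finset.mem_filter.mp hp).2
    have ht2 : (p.2:ℕ) < n := p.2.isLt
    try dsimp only
    by_cases hc : (p.2:ℕ) = n-1
    · have hnm : ((Pi.single p.1 1 : Fin n → ℚ) - Pi.single p.2 1)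
          ∉ (↑(Submodule.span ℚ (alD n '' {j | 1 ≤ j ∧ j ≤ n ∧ j ≠ n-1})) :
              Set (Fin n → ℚ)) := by
        intro hmem
        have h0 := hker _ hmem
        rw [td_dotV_sub_right, td_dotV_single_right, td_dotV_single_right] at h0
        try dsimp only at h0
        rw [if_pos (by omega : (p.1:ℕ) < n-1), if_neg (by omega : ¬ ((p.2:ℕ) < n-1))] at h0
        norm_num at h0
      rw [Set.indicator_of_notMem hnm, sub_zero, if_pos hc, hal',
        td_dotV_sub_left, td_dotV_single_left, td_dotV_single_left]
      simp only [Pi.sub_apply, Pi.single_apply, Fin.ext_iff]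
      split_ifs <;> first | (exfalso; omega) | norm_num
    · have hm : ((Pi.single p.1 1 : Fin n → ℚ) - Pi.single p.2 1)
          ∈ (↑(Submodule.span ℚ (alD n '' {j | 1 ≤ j ∧ j ≤ n ∧ j ≠ n-1})) :
              Set (Fin n → ℚ)) := by
        exact td_sub_mem_span _ p.1.val p.2.val hst.le ht2
          (fun j hj1 hj2 => show 1 ≤ j ∧ j ≤ n ∧ j ≠ n-1 from ⟨by omega, by omega, by omega⟩)
      rw [Set.indicator_of_mem hm, sub_self, if_neg hc]
  have hadd : (∑ p ∈ (Finset.univ : Finset (Fin n × Fin n)).filter (fun p => p.1 < p.2),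
        (dotV (alD n (n-1)) ((Pi.single p.1 1 : Fin n → ℚ) + Pi.single p.2 1)
          - Set.indicator (↑(Submodule.span ℚ (alD n '' {j | 1 ≤ j ∧ j ≤ n ∧ j ≠ n-1})))
              (fun β => dotV (alD n (n-1)) β)
              ((Pi.single p.1 1 : Fin n → ℚ) + Pi.single p.2 1)))
      = ∑ p ∈ (Finset.univ : Finset (Fin n × Fin n)).filter (fun p => p.1 < p.2),
          (fun s t => if t = n-2 then (1:ℚ) else 0) p.1.val p.2.val := by
    refine Finset.sum_congr rfl fun p hp => ?_
    have hst : (p.1:ℕ) < (p.2:ℕ) := (Finset.mem_filter.mp hp).2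
    have ht2 : (p.2:ℕ) < n := p.2.isLt
    try dsimp only
    by_cases hc : (p.2:ℕ) = n-1
    · have hm : ((Pi.single p.1 1 : Fin n → ℚ) + Pi.single p.2 1)
          ∈ (↑(Submodule.span ℚ (alD n '' {j | 1 ≤ j ∧ j ≤ n ∧ j ≠ n-1})) :
              Set (Fin n → ℚ)) := by
        exact td_add_mem_span _ (by omega)
          (show 1 ≤ n ∧ n ≤ n ∧ n ≠ n-1 from ⟨by omega, le_rfl, by omega⟩)
          p.1.val p.2.val hst ht2
          (fun j hj1 hj2 => show 1 ≤ j ∧ j ≤ n ∧ j ≠ n-1 from ⟨by omega, by omega, by omega⟩)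
          (fun j hj1 hj2 => show 1 ≤ j ∧ j ≤ n ∧ j ≠ n-1 from ⟨by omega, by omega, by omega⟩)
      rw [Set.indicator_of_mem hm, sub_self, if_neg (by omega : ¬ ((p.2:ℕ) = n-2))]
    · have hnm : ((Pi.single p.1 1 : Fin n → ℚ) + Pi.single p.2 1)
          ∉ (↑(Submodule.span ℚ (alD n '' {j | 1 ≤ j ∧ j ≤ n ∧ j ≠ n-1})) :
              Set (Fin n → ℚ)) := by
        intro hmem
        have h0 := hker _ hmem
        rw [td_dotV_add_right, td_dotV_single_right, td_dotV_single_right] at h0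
        try dsimp only at h0
        rw [if_pos (by omega : (p.1:ℕ) < n-1), if_pos (by omega : (p.2:ℕ) < n-1)] at h0
        norm_num at h0
      rw [Set.indicator_of_notMem hnm, sub_zero, hal',
        td_dotV_sub_left, td_dotV_single_left, td_dotV_single_left]
      simp only [Pi.add_apply, Pi.single_apply, Fin.ext_iff]
      split_ifs <;> first | (exfalso; omega) | norm_num
  rw [hsub, hadd,
    td_pair_sum (fun s t => if t = n-1 then ((if s = n-2 then (1:ℚ) else 0) + 1) else 0),
    td_pair_sum (fun s t => if t = n-2 then (1:ℚ) else 0)]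
  have e1 : ∑ s ∈ Finset.range n, ∑ t ∈ Finset.range n,
      (if s < t then (if t = n-1 then ((if s = n-2 then (1:ℚ) else 0) + 1) else 0) else 0)
      = (1 : ℚ) + ((n - 1 : ℕ) : ℚ) := by
    have hpt : ∀ s ∈ Finset.range n, ∀ t ∈ Finset.range n,
        (if s < t then (if t = n-1 then ((if s = n-2 then (1:ℚ) else 0) + 1) else 0) else 0)
          = (if t = n-1 then (if s = n-2 then (1:ℚ) else 0) else 0)
            + (if t = n-1 then (if s < n-1 then (1:ℚ) else 0) else 0) := by
      intro s hs t ht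
      have hs' : s < n := Finset.mem_range.mp hs
      have ht' : t < n := Finset.mem_range.mp ht
      split_ifs <;> first | (exfalso; omega) | norm_num
    rw [Finset.sum_congr rfl (fun s hs => Finset.sum_congr rfl (fun t ht => hpt s hs t ht))]
    simp only [Finset.sum_add_distrib]
    have hA : ∑ s ∈ Finset.range n, ∑ t ∈ Finset.range n,
        (if t = n-1 then (if s = n-2 then (1:ℚ) else 0) else 0) = (1:ℚ) := by
      have h1 : ∀ s ∈ Finset.range n, (∑ t ∈ Finset.range n,
          (if t = n-1 then (if s = n-2 then (1:ℚ) else 0) else 0))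
          = (if s = n-2 then (1:ℚ) else 0) := by
        intro s _
        rw [td_sum_if_eq n (n-1) (by omega)]
      rw [Finset.sum_congr rfl h1, td_sum_if_eq n (n-2) (by omega)]
    have hB : ∑ s ∈ Finset.range n, ∑ t ∈ Finset.range n,
        (if t = n-1 then (if s < n-1 then (1:ℚ) else 0) else 0) = ((n - 1 : ℕ) : ℚ) := by
      have h1 : ∀ s ∈ Finset.range n, (∑ t ∈ Finset.range n,
          (if t = n-1 then (if s < n-1 then (1:ℚ) else 0) else 0))
          = (if s < n-1 then (1:ℚ) else 0) := by
        intro s _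
        rw [td_sum_if_eq n (n-1) (by omega)]
      rw [Finset.sum_congr rfl h1, td_count_lt n (n-1) (by omega)]
    rw [hA, hB]
  have e2 : ∑ s ∈ Finset.range n, ∑ t ∈ Finset.range n,
      (if s < t then (if t = n-2 then (1:ℚ) else 0) else 0)
      = ((n - 2 : ℕ) : ℚ) := by
    have hpt : ∀ s ∈ Finset.range n, ∀ t ∈ Finset.range n,
        (if s < t then (if t = n-2 then (1:ℚ) else 0) else 0)
          = (if t = n-2 then (if s < n-2 then (1:ℚ) else 0) else 0) := by
      intro s hs t ht
      split_ifs <;> first | (exfalso; omega) | norm_num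
    rw [Finset.sum_congr rfl (fun s hs => Finset.sum_congr rfl (fun t ht => hpt s hs t ht))]
    have h1 : ∀ s ∈ Finset.range n, (∑ t ∈ Finset.range n,
        (if t = n-2 then (if s < n-2 then (1:ℚ) else 0) else 0))
        = (if s < n-2 then (1:ℚ) else 0) := by
      intro s _
      rw [td_sum_if_eq n (n-2) (by omega)]
    rw [Finset.sum_congr rfl h1, td_count_lt n (n-2) (by omega)]
  rw [e1, e2, Nat.cast_sub (by omega : 1 ≤ n), Nat.cast_sub (by omega : 2 ≤ n)]
  push_cast
  ring

/-- Case `i = n`. -/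
lemma td_caseC (n : ℕ) (hn : 4 ≤ n) :
    2 * dotV (corootV (alD n n))
        (rhoSubD n Set.univ -
          rhoSubD n
            (Submodule.span ℚ (alD n '' {j | 1 ≤ j ∧ j ≤ n ∧ j ≠ n}) :
              Submodule ℚ (Fin n → ℚ))) =
      2 * (n : ℚ) - 2 := by
  have hal : alD n n
      = (Pi.single (⟨n-2, by omega⟩ : Fin n) 1 : Fin n → ℚ)
        + Pi.single (⟨n-1, by omega⟩ : Fin n) 1 :=
    td_alD_top (by omega)
  have hco : corootV (alD n n) = alD n n := by
    rw [hal]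
    exact td_corootV_add _ _ (by simp only [ne_eq, Fin.ext_iff]; omega)
  rw [hco, td_reduction, td_sum_pos_split]
  have hker := td_span_ker (n := n) (fun _ => (1:ℚ))
      {j | 1 ≤ j ∧ j ≤ n ∧ j ≠ n} (by
    rintro j ⟨hj1, hj2, hj3⟩
    have hjn : j < n := by omega
    rw [td_alD_lt j hj1 hjn, td_dotV_sub_right, td_dotV_single_right, td_dotV_single_right]
    norm_num)
  have hsub : (∑ p ∈ (Finset.univ : Finset (Fin n × Fin n)).filter (fun p => p.1 < p.2),
        (dotV (alD n n) ((Pi.single p.1 1 : Fin n → ℚ) - Pi.single p.2 1)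
          - Set.indicator (↑(Submodule.span ℚ (alD n '' {j | 1 ≤ j ∧ j ≤ n ∧ j ≠ n})))
              (fun β => dotV (alD n n) β)
              ((Pi.single p.1 1 : Fin n → ℚ) - Pi.single p.2 1)))
      = 0 := by
    refine Finset.sum_eq_zero fun p hp => ?_
    have hst : (p.1:ℕ) < (p.2:ℕ) := (Finset.mem_filter.mp hp).2
    have ht2 : (p.2:ℕ) < n := p.2.isLt
    have hm : ((Pi.single p.1 1 : Fin n → ℚ) - Pi.single p.2 1)
        ∈ (↑(Submodule.span ℚ (alD n '' {j | 1 ≤ j ∧ j ≤ n ∧ j ≠ n})) :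
            Set (Fin n → ℚ)) := by
      exact td_sub_mem_span _ p.1.val p.2.val hst.le ht2
        (fun j hj1 hj2 => show 1 ≤ j ∧ j ≤ n ∧ j ≠ n from ⟨by omega, by omega, by omega⟩)
    rw [Set.indicator_of_mem hm, sub_self]
  have hadd : (∑ p ∈ (Finset.univ : Finset (Fin n × Fin n)).filter (fun p => p.1 < p.2),
        (dotV (alD n n) ((Pi.single p.1 1 : Fin n → ℚ) + Pi.single p.2 1)
          - Set.indicator (↑(Submodule.span ℚ (alD n '' {j | 1 ≤ j ∧ j ≤ n ∧ j ≠ n})))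
              (fun β => dotV (alD n n) β)
              ((Pi.single p.1 1 : Fin n → ℚ) + Pi.single p.2 1)))
      = ∑ p ∈ (Finset.univ : Finset (Fin n × Fin n)).filter (fun p => p.1 < p.2),
          (fun s t => (if s = n-2 then (1:ℚ) else 0) + (if t = n-2 then (1:ℚ) else 0)
            + (if t = n-1 then (1:ℚ) else 0)) p.1.val p.2.val := by
    refine Finset.sum_congr rfl fun p hp => ?_
    have hst : (p.1:ℕ) < (p.2:ℕ) := (Finset.mem_filter.mp hp).2
    have ht2 : (p.2:ℕ) < n := p.2.isLt
    try dsimp only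
    have hnm : ((Pi.single p.1 1 : Fin n → ℚ) + Pi.single p.2 1)
        ∉ (↑(Submodule.span ℚ (alD n '' {j | 1 ≤ j ∧ j ≤ n ∧ j ≠ n})) :
            Set (Fin n → ℚ)) := by
      intro hmem
      have h0 := hker _ hmem
      rw [td_dotV_add_right, td_dotV_single_right, td_dotV_single_right] at h0
      norm_num at h0
    rw [Set.indicator_of_notMem hnm, sub_zero, hal,
      td_dotV_add_left, td_dotV_single_left, td_dotV_single_left]
    simp only [Pi.add_apply, Pi.single_apply, Fin.ext_iff]
    split_ifs <;> first | (exfalso; omega) | norm_num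
  rw [hsub, hadd,
    td_pair_sum (fun s t => (if s = n-2 then (1:ℚ) else 0) + (if t = n-2 then (1:ℚ) else 0)
      + (if t = n-1 then (1:ℚ) else 0))]
  have e2 : ∑ s ∈ Finset.range n, ∑ t ∈ Finset.range n,
      (if s < t then ((if s = n-2 then (1:ℚ) else 0) + (if t = n-2 then (1:ℚ) else 0)
        + (if t = n-1 then (1:ℚ) else 0)) else 0)
      = (1 : ℚ) + ((n - 2 : ℕ) : ℚ) + ((n - 1 : ℕ) : ℚ) := by
    have hpt : ∀ s ∈ Finset.range n, ∀ t ∈ Finset.range n,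
        (if s < t then ((if s = n-2 then (1:ℚ) else 0) + (if t = n-2 then (1:ℚ) else 0)
          + (if t = n-1 then (1:ℚ) else 0)) else 0)
          = (if s = n-2 then (if n-1 ≤ t then (1:ℚ) else 0) else 0)
            + (if t = n-2 then (if s < n-2 then (1:ℚ) else 0) else 0)
            + (if t = n-1 then (if s < n-1 then (1:ℚ) else 0) else 0) := by
      intro s hs t ht
      have hs' : s < n := Finset.mem_range.mp hs
      have ht' : t < n := Finset.mem_range.mp ht
      split_ifs <;> first | (exfalso; omega) | norm_num
    rw [Finset.sum_congr rfl (fun s hs => Finset.sum_congr rfl (fun t ht => hpt s hs t ht))]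
    simp only [Finset.sum_add_distrib]
    have hA : ∑ s ∈ Finset.range n, ∑ t ∈ Finset.range n,
        (if s = n-2 then (if n-1 ≤ t then (1:ℚ) else 0) else 0) = (1:ℚ) := by
      have h1 : ∀ s ∈ Finset.range n, (∑ t ∈ Finset.range n,
          (if s = n-2 then (if n-1 ≤ t then (1:ℚ) else 0) else 0))
          = (if s = n-2 then ((n - (n-1) : ℕ) : ℚ) else 0) := by
        intro s _
        by_cases h : s = n-2
        · simp only [h, if_true, td_count_ge]
        · simp [h]
      rw [Finset.sum_congr rfl h1, td_sum_if_eq n (n-2) (by omega)]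
      have : n - (n-1) = 1 := by omega
      rw [this]
      norm_num
    have hB : ∑ s ∈ Finset.range n, ∑ t ∈ Finset.range n,
        (if t = n-2 then (if s < n-2 then (1:ℚ) else 0) else 0) = ((n - 2 : ℕ) : ℚ) := by
      have h1 : ∀ s ∈ Finset.range n, (∑ t ∈ Finset.range n,
          (if t = n-2 then (if s < n-2 then (1:ℚ) else 0) else 0))
          = (if s < n-2 then (1:ℚ) else 0) := by
        intro s _
        rw [td_sum_if_eq n (n-2) (by omega)]
      rw [Finset.sum_congr rfl h1, td_count_lt n (n-2) (by omega)]
    have hC : ∑ s ∈ Finset.range n, ∑ t ∈ Finset.range n,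
        (if t = n-1 then (if s < n-1 then (1:ℚ) else 0) else 0) = ((n - 1 : ℕ) : ℚ) := by
      have h1 : ∀ s ∈ Finset.range n, (∑ t ∈ Finset.range n,
          (if t = n-1 then (if s < n-1 then (1:ℚ) else 0) else 0))
          = (if s < n-1 then (1:ℚ) else 0) := by
        intro s _
        rw [td_sum_if_eq n (n-1) (by omega)]
      rw [Finset.sum_congr rfl h1, td_count_lt n (n-1) (by omega)]
    rw [hA, hB, hC]
  rw [e2, Nat.cast_sub (by omega : 2 ≤ n), Nat.cast_sub (by omega : 1 ≤ n)]
  push_cast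
  ring

end Cases

/-- In type `D_n` (`n ≥ 4`), for `i ∈ [n]`,
`2⟨α_i^∨, ρ − ρ_{I∖{i}}⟩ = 2n − i − 1` if `2 ≤ i ≤ n−2`, and `= 2n − 2` if
`i ∈ {1, n−1, n}`. -/
theorem typeD_rho_pairing (n i : ℕ) (hn : 4 ≤ n) (hi1 : 1 ≤ i) (hi2 : i ≤ n) :
    ((2 ≤ i ∧ i ≤ n - 2) →
      2 * dotV (corootV (alD n i))
          (rhoSubD n Set.univ -
            rhoSubD n
              (Submodule.span ℚ (alD n '' {j | 1 ≤ j ∧ j ≤ n ∧ j ≠ i}) :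
                Submodule ℚ (Fin n → ℚ))) =
        2 * (n : ℚ) - (i : ℚ) - 1) ∧
    ((i = 1 ∨ i = n - 1 ∨ i = n) →
      2 * dotV (corootV (alD n i))
          (rhoSubD n Set.univ -
            rhoSubD n
              (Submodule.span ℚ (alD n '' {j | 1 ≤ j ∧ j ≤ n ∧ j ≠ i}) :
                Submodule ℚ (Fin n → ℚ))) =
        2 * (n : ℚ) - 2) := by
  constructor
  · rintro ⟨h1, h2⟩
    exact td_caseA n i hn (by omega) h2
  · intro h
    rcases h with h1 | h2 | h3
    · subst h1
      rw [td_caseA n 1 hn le_rfl (by omega)]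
      ring
    · subst h2
      exact td_caseB _ hn
    · subst h3
      exact td_caseC _ hn
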